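/- arXiv:2508.04445 — 2 statements merged into one kernel-verified Lean document; each statement's English description precedes it below -/
import Mathlib

section
/- Let G be a connected P_5-free graph whose block-cut tree has diameter 4, and let C be the central block of G (the unique block that is not a leaf in the block-cut tree). Then the set of cut vertices of G induces a complete subgraph of G, and all cut vertices lie in C. -/
open Classical

variable {V : Type}

/-- Reachability within a vertex subset `s` of the graph `G`. -/
def ReachIn (G : SimpleGraph V) (s : Finset V) (u v : V) : Prop :=
  Relation.ReflTransGen (fun a b => a ∈ s ∧ b ∈ s ∧ G.Adj a b) u v

/-- The induced subgraph of `G` on `s` is (nonempty and) connected. -/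
def ConnIn (G : SimpleGraph V) (s : Finset V) : Prop :=
  s.Nonempty ∧ ∀ u ∈ s, ∀ v ∈ s, ReachIn G s u v

/-- The vertex set of the connected component of `v` in the induced subgraph on `s`. -/
noncomputable def compIn (G : SimpleGraph V) (s : Finset V) (v : V) : Finset V :=
  s.filter (fun u => ReachIn G s v u)

/-- Fuel-based recursion computing the treedepth of the induced subgraph of `G` on `s`
(correct whenever the fuel is at least `s.card`): treedepth of the null graph is `0`;
for a connected graph it is `1 + min_v td(G - v)`; otherwise the max over components. -/
noncomputable def tdAux (G : SimpleGraph V) : ℕ → Finset V → ℕ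
  | 0, _ => 0
  | n+1, s =>
    if hs : s = ∅ then 0
    else if ConnIn G s then
      1 + s.inf' (Finset.nonempty_of_ne_empty hs) (fun v => tdAux G n (s.erase v))
    else
      s.sup (fun v => tdAux G n (compIn G s v))

/-- The treedepth of the induced subgraph of `G` on the vertex set `s`. -/
noncomputable def tdOn (G : SimpleGraph V) (s : Finset V) : ℕ := tdAux G s.card s

/-- The treedepth of a finite graph. -/
noncomputable def td (G : SimpleGraph V) [Fintype V] : ℕ := tdOn G Finset.univ

/-- `B` induces a block-like graph: connected and with no cut vertex
(removing any vertex leaves it connected, when nonempty). -/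
def IsBlockSet (G : SimpleGraph V) (B : Finset V) : Prop :=
  ConnIn G B ∧ ∀ v ∈ B, (B.erase v).Nonempty → ConnIn G (B.erase v)

/-- `B` is a block of the induced subgraph of `G` on `s`: a maximal connected
subgraph without a cut vertex. -/
def IsBlock (G : SimpleGraph V) (s B : Finset V) : Prop :=
  B ⊆ s ∧ IsBlockSet G B ∧ ∀ B' : Finset V, B ⊆ B' → B' ⊆ s → IsBlockSet G B' → B' = B

/-- Fuel-based recursion computing the 2-treedepth of the induced subgraph of `G` on `s`
(correct whenever the fuel is at least `s.card`): `0` for the null graph;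
`1 + min_v td₂(G - v)` if the graph is a block; the max over blocks otherwise. -/
noncomputable def td2Aux (G : SimpleGraph V) : ℕ → Finset V → ℕ
  | 0, _ => 0
  | n+1, s =>
    if hs : s = ∅ then 0
    else if IsBlockSet G s then
      1 + s.inf' (Finset.nonempty_of_ne_empty hs) (fun v => td2Aux G n (s.erase v))
    else
      (s.powerset.filter (fun B => IsBlock G s B)).sup (fun B => td2Aux G n B)

/-- The 2-treedepth of the induced subgraph of `G` on `s`. -/
noncomputable def td2On (G : SimpleGraph V) (s : Finset V) : ℕ := td2Aux G s.card s

/-- The 2-treedepth of a finite graph. -/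
noncomputable def td2 (G : SimpleGraph V) [Fintype V] : ℕ := td2On G Finset.univ

/-- `G` contains a path on `m` vertices as a subgraph. -/
def HasPathOn (G : SimpleGraph V) (m : ℕ) : Prop :=
  ∃ p : Fin m → V, Function.Injective p ∧
    ∀ i : Fin m, ∀ h : i.1 + 1 < m, G.Adj (p i) (p ⟨i.1 + 1, h⟩)

/-- `G` contains an induced path on `m` vertices: `m` distinct vertices with
adjacency exactly between consecutive ones. -/
def HasInducedPathOn (G : SimpleGraph V) (m : ℕ) : Prop :=
  ∃ p : Fin m → V, Function.Injective p ∧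
    ∀ i j : Fin m, G.Adj (p i) (p j) ↔ (i.1 + 1 = j.1 ∨ j.1 + 1 = i.1)

/-- `G` is `P_t`-free: it has no induced path on `t` vertices. -/
def PtFree (G : SimpleGraph V) (t : ℕ) : Prop := ¬ HasInducedPathOn G t

/-- `v` is a cut vertex of the finite graph `G`: removing it disconnects two
vertices that were connected in `G`. -/
def IsCutVertex (G : SimpleGraph V) [Fintype V] (v : V) : Prop :=
  ∃ u w : V, u ≠ v ∧ w ≠ v ∧ ReachIn G Finset.univ u w ∧
    ¬ ReachIn G (Finset.univ.erase v) u w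

/-- Vertices of the block-cut tree of `G`: blocks of `G` together with cut vertices of `G`. -/
def BCVert (G : SimpleGraph V) [Fintype V] : Type :=
  {B : Finset V // IsBlock G Finset.univ B} ⊕ {v : V // IsCutVertex G v}

/-- The block-cut tree (forest of blocks) of `G`: a block `B` is adjacent to a
cut vertex `v` exactly when `v ∈ B`. -/
def bcTree (G : SimpleGraph V) [Fintype V] : SimpleGraph (BCVert G) where
  Adj x y := match x, y with
    | Sum.inl B, Sum.inr v => v.1 ∈ B.1
    | Sum.inr v, Sum.inl B => v.1 ∈ B.1
    | _, _ => False
  symm := ⟨by rintro (B|v) (B'|v') h <;> simp_all⟩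
  loopless := ⟨by rintro (B|v) h <;> simp_all⟩

section Infra

variable {V : Type} {G : SimpleGraph V}

lemma ReachIn.mono {s t : Finset V} {u v : V} (hst : s ⊆ t) (h : ReachIn G s u v) :
    ReachIn G t u v := by
  unfold ReachIn at h ⊢
  induction h with
  | refl => exact .refl
  | tail _ hbc ih => exact ih.tail ⟨hst hbc.1, hst hbc.2.1, hbc.2.2⟩

lemma ReachIn.symm {s : Finset V} {u v : V} (h : ReachIn G s u v) : ReachIn G s v u := by
  unfold ReachIn at h ⊢
  induction h with
  | refl => exact .refl
  | tail _ hbc ih => exact Relation.ReflTransGen.head ⟨hbc.2.1, hbc.1, hbc.2.2.symm⟩ ih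

lemma ReachIn.trans {s : Finset V} {u v w : V} (h1 : ReachIn G s u v) (h2 : ReachIn G s v w) :
    ReachIn G s u w :=
  Relation.ReflTransGen.trans h1 h2

lemma ReachIn.single {s : Finset V} {u v : V} (hu : u ∈ s) (hv : v ∈ s) (h : G.Adj u v) :
    ReachIn G s u v :=
  Relation.ReflTransGen.single ⟨hu, hv, h⟩

lemma eq_of_reachIn_erase_self {s : Finset V} {u z : V} (h : ReachIn G (s.erase u) u z) :
    u = z := by
  rcases Relation.ReflTransGen.cases_head h with h | ⟨c, hc, -⟩
  · exact h
  · exact absurd hc.1 (Finset.notMem_erase _ _)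

lemma reach_escape [Fintype V] {u p q : V} (h : ReachIn G Finset.univ p q) (hq : q ≠ u) :
    ReachIn G (Finset.univ.erase u) p q ∨
      ∃ b, G.Adj u b ∧ ReachIn G (Finset.univ.erase u) b q := by
  induction h using Relation.ReflTransGen.head_induction_on with
  | refl => exact Or.inl .refl
  | head hstep htail ih =>
    obtain ⟨-, -, hadj⟩ := hstep
    rename_i a c
    by_cases hc : c = u
    · subst hc
      rcases ih with hr | hr
      · exact absurd (eq_of_reachIn_erase_self hr).symm hq
      · exact Or.inr hr
    · by_cases ha : a = u
      · subst ha
        rcases ih with hr | ⟨b, hb, hbr⟩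
        · exact Or.inr ⟨c, hadj, hr⟩
        · exact Or.inr ⟨b, hb, hbr⟩
      · rcases ih with hr | hr
        · exact Or.inl (Relation.ReflTransGen.head
            ⟨Finset.mem_erase.mpr ⟨ha, Finset.mem_univ _⟩,
             Finset.mem_erase.mpr ⟨hc, Finset.mem_univ _⟩, hadj⟩ hr)
        · exact Or.inr hr

lemma cut_nbrs [Fintype V] {u : V} (hu : IsCutVertex G u) (w : V) :
    ∃ a, G.Adj u a ∧ ¬ ReachIn G (Finset.univ.erase u) a w := by
  obtain ⟨p, q, hp, hq, hreach, hnot⟩ := hu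
  obtain ⟨b, hb, hbq⟩ := (reach_escape hreach hq).resolve_left hnot
  obtain ⟨a, ha, hap⟩ := (reach_escape hreach.symm hp).resolve_left (fun h => hnot h.symm)
  by_contra hcon
  push_neg at hcon
  exact hnot ((hap.symm.trans (hcon a ha)).trans ((hcon b hb).symm.trans hbq))

lemma chain_reach {s : Finset V} (p : ℕ → V) (n : ℕ)
    (hadj : ∀ i < n, G.Adj (p i) (p (i+1))) (hmem : ∀ k ≤ n, p k ∈ s) :
    ReachIn G s (p 0) (p n) := by
  induction n with
  | zero => exact .refl
  | succ m ih =>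
    exact (ih (fun i hi => hadj i (by omega)) (fun k hk => hmem k (by omega))).trans
      (ReachIn.single (hmem m (by omega)) (hmem (m+1) le_rfl) (hadj m (by omega)))

lemma reach_to_chain [Fintype V] {a c : V} (h : ReachIn G Finset.univ a c) :
    ∃ n, ∃ p : ℕ → V, p 0 = a ∧ p n = c ∧ ∀ i < n, G.Adj (p i) (p (i+1)) := by
  induction h with
  | refl => exact ⟨0, fun _ => a, rfl, rfl, by omega⟩
  | tail hab hbc ih =>
    rename_i b z
    obtain ⟨n, p, h0, hn, hadj⟩ := ih
    obtain ⟨-, -, hbz⟩ := hbc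
    refine ⟨n+1, fun t => if t ≤ n then p t else z, by simp [h0], by simp, ?_⟩
    intro i hi
    by_cases h : i < n
    · simp only [show i ≤ n by omega, show i+1 ≤ n by omega, if_true]
      exact hadj i h
    · have hin : i = n := by omega
      subst hin
      simp only [le_refl, if_true, show ¬ (i+1 ≤ i) by omega, if_false]
      rw [hn]
      exact hbz

lemma reachIn_univ_of_connected [Fintype V] (h : G.Preconnected) (a b : V) :
    ReachIn G Finset.univ a b := by
  obtain ⟨w⟩ := h a b
  induction w with
  | nil => exact .refl
  | cons hadj _ ih =>
    exact (ReachIn.single (Finset.mem_univ _) (Finset.mem_univ _) hadj).trans ih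

end Infra
section MinChain

variable {V : Type} {G : SimpleGraph V}

lemma exists_minChain [Fintype V] (a c : V) (h : ReachIn G Finset.univ a c) :
    ∃ n, ∃ p : ℕ → V, p 0 = a ∧ p n = c ∧ (∀ i < n, G.Adj (p i) (p (i+1))) ∧
      (∀ k m, k ≤ n → m ≤ n → k ≠ m → p k ≠ p m) ∧
      (∀ k m, k ≤ n → m ≤ n → G.Adj (p k) (p m) → m = k + 1 ∨ k = m + 1) := by
  classical
  have hex : ∃ n, ∃ p : ℕ → V, p 0 = a ∧ p n = c ∧ ∀ i < n, G.Adj (p i) (p (i+1)) :=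
    reach_to_chain h
  obtain ⟨p, h0, hn, hadj⟩ := Nat.find_spec hex
  set n := Nat.find hex with hndef
  -- helper: no shorter chain
  have hmin : ∀ n' , n' < n → ∀ q : ℕ → V, q 0 = a → q n' = c →
      (∀ i < n', G.Adj (q i) (q (i+1))) → False := by
    intro n' hlt q hq0 hqn hqadj
    exact absurd (Nat.find_min' hex ⟨q, hq0, hqn, hqadj⟩) (by omega)
  -- no duplicates (strict version)
  have hnd' : ∀ k m, k < m → m ≤ n → p k ≠ p m := by
    intro k m hkm hm heq
    refine hmin (n - (m - k)) (by omega) (fun t => if t ≤ k then p t else p (t + (m - k)))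
      (by simp [h0]) ?_ ?_
    · by_cases hc : n - (m - k) ≤ k
      · have h1 : m = n := by omega
        have h2 : n - (m - k) = k := by omega
        rw [h2]
        simp only [le_refl, if_true]
        rw [heq, h1] at *
        exact hn
      · simp only [if_neg hc]
        rw [show n - (m - k) + (m - k) = n by omega]
        exact hn
    · intro i hi
      by_cases h1 : i + 1 ≤ k
      · simp only [show i ≤ k by omega, h1, if_true]
        exact hadj i (by omega)
      · by_cases h2 : i ≤ k
        · have hik : i = k := by omega
          simp only [if_pos h2, if_neg h1]
          rw [hik, show k + 1 + (m - k) = m + 1 by omega, heq]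
          exact hadj m (by omega)
        · simp only [if_neg h2, if_neg h1]
          rw [show i + 1 + (m - k) = (i + (m - k)) + 1 by omega]
          exact hadj (i + (m - k)) (by omega)
  -- no chords (strict version)
  have hcf' : ∀ k m, k + 1 < m → m ≤ n → ¬ G.Adj (p k) (p m) := by
    intro k m hkm hm hadjkm
    refine hmin (n - (m - k - 1)) (by omega)
      (fun t => if t ≤ k then p t else p (t + (m - k - 1)))
      (by simp [h0]) ?_ ?_
    · have hc : ¬ (n - (m - k - 1) ≤ k) := by omega
      simp only [if_neg hc]
      rw [show n - (m - k - 1) + (m - k - 1) = n by omega]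
      exact hn
    · intro i hi
      by_cases h1 : i + 1 ≤ k
      · simp only [show i ≤ k by omega, h1, if_true]
        exact hadj i (by omega)
      · by_cases h2 : i ≤ k
        · have hik : i = k := by omega
          simp only [if_pos h2, if_neg h1]
          rw [hik, show k + 1 + (m - k - 1) = m by omega]
          exact hadjkm
        · simp only [if_neg h2, if_neg h1]
          rw [show i + 1 + (m - k - 1) = (i + (m - k - 1)) + 1 by omega]
          exact hadj (i + (m - k - 1)) (by omega)
  refine ⟨n, p, h0, hn, hadj, ?_, ?_⟩
  · intro k m hk hm hne
    rcases Nat.lt_or_ge k m with h | h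
    · exact hnd' k m h hm
    · exact fun he => hnd' m k (by omega) hk he.symm
  · intro k m hk hm hadjkm
    by_contra hcon
    push_neg at hcon
    have hne : k ≠ m := fun he => G.loopless.irrefl _ (he ▸ hadjkm)
    rcases Nat.lt_or_ge k m with h | h
    · exact hcf' k m (by omega) hm hadjkm
    · exact hcf' m k (by omega) hk hadjkm.symm

lemma hasInducedPath_five {G : SimpleGraph V} (n : ℕ) (p : ℕ → V) (hn5 : 4 ≤ n)
    (hadj : ∀ i < n, G.Adj (p i) (p (i+1)))
    (hnd : ∀ k m, k ≤ n → m ≤ n → k ≠ m → p k ≠ p m)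
    (hcf : ∀ k m, k ≤ n → m ≤ n → G.Adj (p k) (p m) → m = k + 1 ∨ k = m + 1) :
    HasInducedPathOn G 5 := by
  refine ⟨fun i => p i.1, ?_, ?_⟩
  · intro i j hij
    have hi := i.isLt; have hj := j.isLt
    by_contra hne
    exact hnd i.1 j.1 (by omega) (by omega)
      (fun h => hne (Fin.val_injective h)) hij
  · intro i j
    have hi := i.isLt; have hj := j.isLt
    constructor
    · intro hadj'
      rcases hcf i.1 j.1 (by omega) (by omega) hadj' with h | h
      · exact Or.inl h.symm
      · exact Or.inr h.symm
    · rintro (h | h)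
      · have := hadj i.1 (by omega)
        rwa [h] at this
      · have := hadj j.1 (by omega)
        rw [h] at this
        exact this.symm

lemma cut_clique [Fintype V] {G : SimpleGraph V} (hconn : G.Connected) (hfree : PtFree G 5) :
    ∀ u w : V, IsCutVertex G u → IsCutVertex G w → u ≠ w → G.Adj u w := by
  intro u w hu hw huw
  by_contra hnadj
  obtain ⟨a, hua, haw⟩ := cut_nbrs hu w
  obtain ⟨b, hwb, hbu⟩ := cut_nbrs hw u
  have hau : a ≠ u := hua.ne'
  have hbw : b ≠ w := hwb.ne'
  have haw' : a ≠ w := by rintro rfl; exact haw .refl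
  have hbu' : b ≠ u := by rintro rfl; exact hbu .refl
  have hreach : ReachIn G Finset.univ a b :=
    reachIn_univ_of_connected hconn.preconnected a b
  obtain ⟨n, p, h0, hn, hadj, hnd, hcf⟩ := exists_minChain a b hreach
  have hu_mem : ∃ k, k ≤ n ∧ p k = u := by
    by_contra hno
    push_neg at hno
    have hmem : ∀ k ≤ n, p k ∈ Finset.univ.erase u :=
      fun k hk => Finset.mem_erase.mpr ⟨hno k hk, Finset.mem_univ _⟩
    have hr : ReachIn G (Finset.univ.erase u) a b := h0 ▸ hn ▸ chain_reach p n hadj hmem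
    exact haw (hr.trans (ReachIn.single
      (Finset.mem_erase.mpr ⟨hbu', Finset.mem_univ _⟩)
      (Finset.mem_erase.mpr ⟨Ne.symm huw, Finset.mem_univ _⟩) hwb.symm))
  have hw_mem : ∃ k, k ≤ n ∧ p k = w := by
    by_contra hno
    push_neg at hno
    have hmem : ∀ k ≤ n, p k ∈ Finset.univ.erase w :=
      fun k hk => Finset.mem_erase.mpr ⟨hno k hk, Finset.mem_univ _⟩
    have hr : ReachIn G (Finset.univ.erase w) a b := h0 ▸ hn ▸ chain_reach p n hadj hmem
    exact hbu (hr.symm.trans (ReachIn.single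
      (Finset.mem_erase.mpr ⟨haw', Finset.mem_univ _⟩)
      (Finset.mem_erase.mpr ⟨huw, Finset.mem_univ _⟩) hua.symm))
  obtain ⟨ku, hku, hpu⟩ := hu_mem
  obtain ⟨kw, hkw, hpw⟩ := hw_mem
  have hku0 : ku ≠ 0 := by rintro rfl; rw [h0] at hpu; exact hau hpu
  have hkun : ku ≠ n := by rintro rfl; rw [hn] at hpu; exact hbu' hpu
  have hkw0 : kw ≠ 0 := by rintro rfl; rw [h0] at hpw; exact haw' hpw
  have hkwn : kw ≠ n := by rintro rfl; rw [hn] at hpw; exact hbw hpw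
  have hkukw : ku ≠ kw := by rintro rfl; rw [hpu] at hpw; exact huw hpw
  have hc1 : kw ≠ ku + 1 := by
    rintro rfl
    exact hnadj (by rw [← hpu, ← hpw]; exact hadj ku (by omega))
  have hc2 : ku ≠ kw + 1 := by
    rintro rfl
    exact hnadj (by rw [← hpu, ← hpw]; exact (hadj kw (by omega)).symm)
  exact hfree (hasInducedPath_five n p (by omega) hadj hnd hcf)

end MinChain
section Blocks

variable {V : Type} {G : SimpleGraph V}

lemma connIn_hub {s : Finset V} {h : V} (hh : h ∈ s) (hub : ∀ x ∈ s, x = h ∨ G.Adj h x) :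
    ConnIn G s := by
  refine ⟨⟨h, hh⟩, ?_⟩
  have key : ∀ x ∈ s, ReachIn G s h x := by
    intro x hx
    rcases hub x hx with rfl | hadj
    · exact .refl
    · exact ReachIn.single hh hx hadj
  intro x hx y hy
  exact (key x hx).symm.trans (key y hy)

lemma ConnIn.union {s t : Finset V} {x : V} (hs : ConnIn G s) (ht : ConnIn G t)
    (hxs : x ∈ s) (hxt : x ∈ t) : ConnIn G (s ∪ t) := by
  refine ⟨⟨x, Finset.mem_union_left _ hxs⟩, ?_⟩
  have key : ∀ y ∈ s ∪ t, ReachIn G (s ∪ t) y x := by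
    intro y hy
    rcases Finset.mem_union.mp hy with h | h
    · exact (hs.2 y h x hxs).mono Finset.subset_union_left
    · exact (ht.2 y h x hxt).mono Finset.subset_union_right
  intro y hy z hz
  exact (key y hy).trans (key z hz).symm

lemma IsBlockSet.erase_conn {B : Finset V} (hB : IsBlockSet G B) (z : V)
    (hne : (B.erase z).Nonempty) : ConnIn G (B.erase z) := by
  by_cases hz : z ∈ B
  · exact hB.2 z hz hne
  · rw [Finset.erase_eq_of_notMem hz]; exact hB.1

lemma IsBlockSet.union {B1 B2 : Finset V} {x y : V} (h1 : IsBlockSet G B1)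
    (h2 : IsBlockSet G B2) (hx1 : x ∈ B1) (hx2 : x ∈ B2) (hy1 : y ∈ B1) (hy2 : y ∈ B2)
    (hxy : x ≠ y) : IsBlockSet G (B1 ∪ B2) := by
  constructor
  · exact h1.1.union h2.1 hx1 hx2
  · intro z hz hne
    have hkey : ∃ r, r ≠ z ∧ r ∈ B1 ∧ r ∈ B2 := by
      rcases eq_or_ne x z with rfl | hxz
      · exact ⟨y, Ne.symm hxy, hy1, hy2⟩
      · exact ⟨x, hxz, hx1, hx2⟩
    obtain ⟨r, hrz, hr1, hr2⟩ := hkey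
    rw [Finset.erase_union_distrib]
    exact (h1.erase_conn z ⟨r, Finset.mem_erase.mpr ⟨hrz, hr1⟩⟩).union
      (h2.erase_conn z ⟨r, Finset.mem_erase.mpr ⟨hrz, hr2⟩⟩)
      (Finset.mem_erase.mpr ⟨hrz, hr1⟩) (Finset.mem_erase.mpr ⟨hrz, hr2⟩)

lemma block_eq_of_two_common [Fintype V] {B1 B2 : Finset V} {x y : V}
    (h1 : IsBlock G Finset.univ B1) (h2 : IsBlock G Finset.univ B2)
    (hx1 : x ∈ B1) (hx2 : x ∈ B2) (hy1 : y ∈ B1) (hy2 : y ∈ B2) (hxy : x ≠ y) :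
    B1 = B2 := by
  have hu : IsBlockSet G (B1 ∪ B2) := h1.2.1.union h2.2.1 hx1 hx2 hy1 hy2 hxy
  have e1 : B1 ∪ B2 = B1 := h1.2.2 _ Finset.subset_union_left (Finset.subset_univ _) hu
  have e2 : B1 ∪ B2 = B2 := h2.2.2 _ Finset.subset_union_right (Finset.subset_univ _) hu
  rw [← e1, e2]

lemma exists_block_superset [Fintype V] {T : Finset V} (hT : IsBlockSet G T) :
    ∃ D, IsBlock G Finset.univ D ∧ T ⊆ D := by
  classical
  set F := Finset.univ.powerset.filter (fun B => T ⊆ B ∧ IsBlockSet G B) with hF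
  have hTF : T ∈ F := by
    simp only [hF, Finset.mem_filter, Finset.mem_powerset]
    exact ⟨Finset.subset_univ _, subset_rfl, hT⟩
  obtain ⟨D, hDF, hmax⟩ := F.exists_max_image Finset.card ⟨T, hTF⟩
  simp only [hF, Finset.mem_filter, Finset.mem_powerset] at hDF
  refine ⟨D, ⟨hDF.1, hDF.2.2, ?_⟩, hDF.2.1⟩
  intro B' hDB' hB'univ hB'
  have hB'F : B' ∈ F := by
    simp only [hF, Finset.mem_filter, Finset.mem_powerset]
    exact ⟨hB'univ, hDF.2.1.trans hDB', hB'⟩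
  exact (Finset.eq_of_subset_of_card_le hDB' (hmax B' hB'F)).symm

lemma blockset_triangle {u x y : V} (hux : G.Adj u x) (huy : G.Adj u y) (hxy : G.Adj x y) :
    IsBlockSet G ({u, x, y} : Finset V) := by
  classical
  have hne_ux : u ≠ x := hux.ne
  have hne_uy : u ≠ y := huy.ne
  have hne_xy : x ≠ y := hxy.ne
  have hub : ∀ z ∈ ({u, x, y} : Finset V), z = u ∨ G.Adj u z := by
    intro z hz
    simp only [Finset.mem_insert, Finset.mem_singleton] at hz
    rcases hz with rfl | rfl | rfl
    · exact Or.inl rfl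
    · exact Or.inr hux
    · exact Or.inr huy
  have pair_conn : ∀ (a b : V), G.Adj a b → ConnIn G ({a, b} : Finset V) := by
    intro a b hab
    refine connIn_hub (Finset.mem_insert_self a _) ?_
    intro z hz
    simp only [Finset.mem_insert, Finset.mem_singleton] at hz
    rcases hz with rfl | rfl
    · exact Or.inl rfl
    · exact Or.inr hab
  refine ⟨connIn_hub (Finset.mem_insert_self u _) hub, ?_⟩
  intro z hz _
  simp only [Finset.mem_insert, Finset.mem_singleton] at hz
  rcases hz with rfl | rfl | rfl
  · have e : ({z, x, y} : Finset V).erase z = {x, y} := by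
      ext w
      simp only [Finset.mem_erase, Finset.mem_insert, Finset.mem_singleton]
      constructor
      · rintro ⟨hw, rfl | rfl | rfl⟩
        · exact absurd rfl hw
        · exact Or.inl rfl
        · exact Or.inr rfl
      · rintro (rfl | rfl)
        · exact ⟨Ne.symm hne_ux, Or.inr (Or.inl rfl)⟩
        · exact ⟨Ne.symm hne_uy, Or.inr (Or.inr rfl)⟩
    rw [e]; exact pair_conn x y hxy
  · have e : ({u, z, y} : Finset V).erase z = {u, y} := by
      ext w
      simp only [Finset.mem_erase, Finset.mem_insert, Finset.mem_singleton]
      constructor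
      · rintro ⟨hw, rfl | rfl | rfl⟩
        · exact Or.inl rfl
        · exact absurd rfl hw
        · exact Or.inr rfl
      · rintro (rfl | rfl)
        · exact ⟨hne_ux, Or.inl rfl⟩
        · exact ⟨Ne.symm hne_xy, Or.inr (Or.inr rfl)⟩
    rw [e]; exact pair_conn u y huy
  · have e : ({u, x, z} : Finset V).erase z = {u, x} := by
      ext w
      simp only [Finset.mem_erase, Finset.mem_insert, Finset.mem_singleton]
      constructor
      · rintro ⟨hw, rfl | rfl | rfl⟩
        · exact Or.inl rfl
        · exact Or.inr rfl
        · exact absurd rfl hw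
      · rintro (rfl | rfl)
        · exact ⟨hne_uy, Or.inl rfl⟩
        · exact ⟨hne_xy, Or.inr (Or.inl rfl)⟩
    rw [e]; exact pair_conn u x hux

end Blocks

theorem p5free_diam4_central {V : Type} [Fintype V] (G : SimpleGraph V)
    (hconn : G.Connected) (hfree : PtFree G 5)
    (hdiam : (bcTree G).diam = 4)
    (C : Finset V) (hC : IsBlock G Finset.univ C)
    (hnotleaf : ∃ x y : BCVert G, x ≠ y ∧
      (bcTree G).Adj (Sum.inl ⟨C, hC⟩) x ∧ (bcTree G).Adj (Sum.inl ⟨C, hC⟩) y) :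
    (∀ u w : V, IsCutVertex G u → IsCutVertex G w → u ≠ w → G.Adj u w) ∧
    (∀ u : V, IsCutVertex G u → u ∈ C) := by
  have claim1 : ∀ u w : V, IsCutVertex G u → IsCutVertex G w → u ≠ w → G.Adj u w :=
    cut_clique hconn hfree
  refine ⟨claim1, ?_⟩
  intro u hu
  by_contra huC
  obtain ⟨x, y, hxy, hx, hy⟩ := hnotleaf
  rcases x with B' | vx
  · exact hx
  rcases y with B'' | vy
  · exact hy
  have hmx : vx.1 ∈ C := hx
  have hmy : vy.1 ∈ C := hy
  have hvxy : vx.1 ≠ vy.1 := by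
    intro h
    exact hxy (by rw [Subtype.ext h])
  have hux : u ≠ vx.1 := fun h => huC (h ▸ hmx)
  have huy : u ≠ vy.1 := fun h => huC (h ▸ hmy)
  have haux : G.Adj u vx.1 := claim1 u vx.1 hu vx.2 hux
  have hauy : G.Adj u vy.1 := claim1 u vy.1 hu vy.2 huy
  have haxy : G.Adj vx.1 vy.1 := claim1 vx.1 vy.1 vx.2 vy.2 hvxy
  obtain ⟨D, hD, hTD⟩ := exists_block_superset (blockset_triangle haux hauy haxy)
  have hxD : vx.1 ∈ D := hTD (by simp)
  have hyD : vy.1 ∈ D := hTD (by simp)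
  have huD : u ∈ D := hTD (by simp)
  have hDC : D = C := block_eq_of_two_common hD hC hxD hmx hyD hmy hvxy
  exact huC (hDC ▸ huD)
end

section
/- Every P_4-free graph G satisfies td(G) = td₂(G), i.e., its treedepth equals its 2-treedepth. -/
open Classical

variable {V : Type}

section Basics
variable {G : SimpleGraph V} {s t : Finset V} {u v w x y : V}

lemma reachIn_mono (hst : s ⊆ t) (h : ReachIn G s u v) : ReachIn G t u v :=
  Relation.ReflTransGen.mono (fun a b ⟨ha, hb, hab⟩ => ⟨hst ha, hst hb, hab⟩) _ _ h

lemma reachIn_symm (h : ReachIn G s u v) : ReachIn G s v u := by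
  induction h with
  | refl => exact Relation.ReflTransGen.refl
  | tail _ hstep ih =>
    exact Relation.ReflTransGen.trans
      (Relation.ReflTransGen.single ⟨hstep.2.1, hstep.1, hstep.2.2.symm⟩) ih

lemma reachIn_trans (h1 : ReachIn G s u v) (h2 : ReachIn G s v w) : ReachIn G s u w :=
  Relation.ReflTransGen.trans h1 h2

lemma reachIn_left_mem (h : ReachIn G s u v) : u = v ∨ u ∈ s := by
  rcases (Relation.ReflTransGen.cases_head h) with h | ⟨c, hc, _⟩
  · exact Or.inl h
  · exact Or.inr hc.1

lemma reachIn_right_mem (h : ReachIn G s u v) : v = u ∨ v ∈ s := by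
  rcases reachIn_left_mem (reachIn_symm h) with h | h
  · exact Or.inl h
  · exact Or.inr h

lemma mem_compIn : u ∈ compIn G s v ↔ u ∈ s ∧ ReachIn G s v u := Finset.mem_filter

lemma compIn_subset : compIn G s v ⊆ s := Finset.filter_subset _ _

lemma self_mem_compIn (hv : v ∈ s) : v ∈ compIn G s v :=
  mem_compIn.2 ⟨hv, Relation.ReflTransGen.refl⟩

lemma reachIn_compIn (h : ReachIn G s v u) : ReachIn G (compIn G s v) v u := by
  induction h with
  | refl => exact Relation.ReflTransGen.refl
  | @tail b c hb hstep ih =>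
    exact Relation.ReflTransGen.tail ih
      ⟨mem_compIn.2 ⟨hstep.1, hb⟩, mem_compIn.2 ⟨hstep.2.1, hb.tail hstep⟩, hstep.2.2⟩

lemma connIn_compIn (hv : v ∈ s) : ConnIn G (compIn G s v) := by
  refine ⟨⟨v, self_mem_compIn hv⟩, fun a ha b hb => ?_⟩
  exact reachIn_trans (reachIn_symm (reachIn_compIn (mem_compIn.1 ha).2))
    (reachIn_compIn (mem_compIn.1 hb).2)

lemma compIn_eq_of_reach (hx : x ∈ s) (h : ReachIn G s x y) : compIn G s x = compIn G s y := by
  ext u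
  simp only [mem_compIn]
  exact ⟨fun ⟨hu, hr⟩ => ⟨hu, reachIn_trans (reachIn_symm h) hr⟩,
    fun ⟨hu, hr⟩ => ⟨hu, reachIn_trans h hr⟩⟩

lemma subset_compIn {B : Finset V} (hB : B ⊆ s) (hconn : ConnIn G B) (hy : y ∈ B) : B ⊆ compIn G s y := by
  intro w hw
  exact mem_compIn.2 ⟨hB hw, reachIn_mono hB (hconn.2 y hy w hw)⟩

lemma compIn_empty_of_not_mem (hv : v ∉ s) : compIn G s v = ∅ := by
  rw [Finset.eq_empty_iff_forall_notMem]
  intro u hu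
  rcases mem_compIn.1 hu with ⟨hus, hr⟩
  rcases reachIn_left_mem hr with h | h
  · exact hv (h ▸ hus)
  · exact hv h

lemma compIn_ssubset (hv : v ∈ s) (hnc : ¬ ConnIn G s) : compIn G s v ⊂ s := by
  refine ssubset_of_subset_of_ne compIn_subset (fun h => hnc ?_)
  refine ⟨⟨v, hv⟩, fun a ha b hb => ?_⟩
  rw [← h] at ha hb
  exact reachIn_trans (reachIn_symm (mem_compIn.1 ha).2) (mem_compIn.1 hb).2

lemma compIn_mono (hst : s ⊆ t) : compIn G s v ⊆ compIn G t v := by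
  intro w hw
  rcases mem_compIn.1 hw with ⟨hws, hr⟩
  exact mem_compIn.2 ⟨hst hws, reachIn_mono hst hr⟩

end Basics
section Fuel
variable {G : SimpleGraph V} {s t B : Finset V} {n : ℕ} {u v w x y : V}

lemma tdAux_empty (n : ℕ) : tdAux G n (∅ : Finset V) = 0 := by
  cases n <;> simp [tdAux]

lemma td2Aux_empty (n : ℕ) : td2Aux G n (∅ : Finset V) = 0 := by
  cases n <;> simp [td2Aux]

lemma blockset_ssubset_of_not (hB : B ⊆ s) (hBb : IsBlockSet G B) (hs : ¬ IsBlockSet G s) :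
    B ⊂ s := ssubset_of_subset_of_ne hB (fun h => hs (h ▸ hBb))

lemma tdAux_fuel : ∀ n m (s : Finset V), s.card ≤ n → s.card ≤ m →
    tdAux G n s = tdAux G m s := by
  intro n
  induction n with
  | zero =>
    intro m s hn _
    rw [Finset.card_eq_zero.1 (Nat.le_zero.1 hn)]
    simp [tdAux_empty]
  | succ n ih =>
    intro m s hn hm
    cases m with
    | zero =>
      rw [Finset.card_eq_zero.1 (Nat.le_zero.1 hm)]
      simp [tdAux_empty]
    | succ m =>
      simp only [tdAux]
      by_cases hs : s = ∅
      · simp [hs]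
      · simp only [dif_neg hs]
        have hcard : 1 ≤ s.card := Finset.card_pos.2 (Finset.nonempty_of_ne_empty hs)
        by_cases hc : ConnIn G s
        · simp only [if_pos hc]
          congr 1
          refine Finset.inf'_congr _ rfl (fun a ha => ?_)
          have h1 : (s.erase a).card = s.card - 1 := Finset.card_erase_of_mem ha
          exact ih m (s.erase a) (by omega) (by omega)
        · simp only [if_neg hc]
          refine Finset.sup_congr rfl (fun a ha => ?_)
          have h1 : (compIn G s a).card < s.card :=
            Finset.card_lt_card (compIn_ssubset ha hc)
          exact ih m (compIn G s a) (by omega) (by omega)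

lemma td2Aux_fuel : ∀ n m (s : Finset V), s.card ≤ n → s.card ≤ m →
    td2Aux G n s = td2Aux G m s := by
  intro n
  induction n with
  | zero =>
    intro m s hn _
    rw [Finset.card_eq_zero.1 (Nat.le_zero.1 hn)]
    simp [td2Aux_empty]
  | succ n ih =>
    intro m s hn hm
    cases m with
    | zero =>
      rw [Finset.card_eq_zero.1 (Nat.le_zero.1 hm)]
      simp [td2Aux_empty]
    | succ m =>
      simp only [td2Aux]
      by_cases hs : s = ∅
      · simp [hs]
      · simp only [dif_neg hs]
        have hcard : 1 ≤ s.card := Finset.card_pos.2 (Finset.nonempty_of_ne_empty hs)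
        by_cases hc : IsBlockSet G s
        · simp only [if_pos hc]
          congr 1
          refine Finset.inf'_congr _ rfl (fun a ha => ?_)
          have h1 : (s.erase a).card = s.card - 1 := Finset.card_erase_of_mem ha
          exact ih m (s.erase a) (by omega) (by omega)
        · simp only [if_neg hc]
          refine Finset.sup_congr rfl (fun B hB => ?_)
          rcases Finset.mem_filter.1 hB with ⟨hBp, hBb⟩
          have h1 : B.card < s.card :=
            Finset.card_lt_card
              (blockset_ssubset_of_not (Finset.mem_powerset.1 hBp) hBb.2.1 hc)
          exact ih m B (by omega) (by omega)

lemma tdOn_empty : tdOn G (∅ : Finset V) = 0 := by simp [tdOn, tdAux_empty]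

lemma td2On_empty : td2On G (∅ : Finset V) = 0 := by simp [td2On, td2Aux_empty]

lemma tdAux_eq_tdOn (h : s.card ≤ n) : tdAux G n s = tdOn G s :=
  tdAux_fuel n s.card s h le_rfl

lemma td2Aux_eq_td2On (h : s.card ≤ n) : td2Aux G n s = td2On G s :=
  td2Aux_fuel n s.card s h le_rfl

lemma tdOn_of_conn (hs : s.Nonempty) (hc : ConnIn G s) :
    tdOn G s = 1 + s.inf' hs (fun v => tdOn G (s.erase v)) := by
  have hne : s ≠ ∅ := Finset.nonempty_iff_ne_empty.1 hs
  have hcard : 1 ≤ s.card := Finset.card_pos.2 hs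
  conv_lhs => rw [tdOn, show s.card = (s.card - 1) + 1 by omega]
  simp only [tdAux, dif_neg hne, if_pos hc]
  congr 1
  refine Finset.inf'_congr _ rfl (fun a ha => ?_)
  have h1 : (s.erase a).card = s.card - 1 := Finset.card_erase_of_mem ha
  exact tdAux_eq_tdOn (by omega)

lemma tdOn_of_not_conn (hs : s ≠ ∅) (hc : ¬ ConnIn G s) :
    tdOn G s = s.sup (fun v => tdOn G (compIn G s v)) := by
  have hcard : 1 ≤ s.card := Finset.card_pos.2 (Finset.nonempty_of_ne_empty hs)
  conv_lhs => rw [tdOn, show s.card = (s.card - 1) + 1 by omega]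
  simp only [tdAux, dif_neg hs, if_neg hc]
  refine Finset.sup_congr rfl (fun a ha => ?_)
  have h1 : (compIn G s a).card < s.card := Finset.card_lt_card (compIn_ssubset ha hc)
  exact tdAux_eq_tdOn (by omega)

lemma td2On_of_block (hs : s.Nonempty) (hc : IsBlockSet G s) :
    td2On G s = 1 + s.inf' hs (fun v => td2On G (s.erase v)) := by
  have hne : s ≠ ∅ := Finset.nonempty_iff_ne_empty.1 hs
  have hcard : 1 ≤ s.card := Finset.card_pos.2 hs
  conv_lhs => rw [td2On, show s.card = (s.card - 1) + 1 by omega]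
  simp only [td2Aux, dif_neg hne, if_pos hc]
  congr 1
  refine Finset.inf'_congr _ rfl (fun a ha => ?_)
  have h1 : (s.erase a).card = s.card - 1 := Finset.card_erase_of_mem ha
  exact td2Aux_eq_td2On (by omega)

lemma td2On_of_not_block (hs : s ≠ ∅) (hc : ¬ IsBlockSet G s) :
    td2On G s = (s.powerset.filter (fun B => IsBlock G s B)).sup (fun B => td2On G B) := by
  have hcard : 1 ≤ s.card := Finset.card_pos.2 (Finset.nonempty_of_ne_empty hs)
  conv_lhs => rw [td2On, show s.card = (s.card - 1) + 1 by omega]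
  simp only [td2Aux, dif_neg hs, if_neg hc]
  refine Finset.sup_congr rfl (fun B hB => ?_)
  rcases Finset.mem_filter.1 hB with ⟨hBp, hBb⟩
  have h1 : B.card < s.card :=
    Finset.card_lt_card (blockset_ssubset_of_not (Finset.mem_powerset.1 hBp) hBb.2.1 hc)
  exact td2Aux_eq_td2On (by omega)

end Fuel
section Mono
variable {G : SimpleGraph V} {s t B : Finset V} {u v w x y : V}

lemma td_pack (G : SimpleGraph V) : ∀ n, ∀ t : Finset V, t.card ≤ n →
    (∀ u, tdOn G t ≤ 1 + tdOn G (t.erase u)) ∧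
    (∀ s ⊆ t, tdOn G s ≤ tdOn G t) := by
  intro n
  induction n using Nat.strong_induction_on with
  | _ n ih =>
  intro t ht
  by_cases hte : t = ∅
  · subst hte
    constructor
    · intro u; simp [tdOn_empty]
    · intro s hs
      rw [Finset.subset_empty.1 hs]
  have htne : t.Nonempty := Finset.nonempty_of_ne_empty hte
  have htcard : 1 ≤ t.card := Finset.card_pos.2 htne
  have hn1 : t.card - 1 < n := by omega
  have hA : ∀ u, tdOn G t ≤ 1 + tdOn G (t.erase u) := by
    intro u
    by_cases hu : u ∈ t
    · by_cases hc : ConnIn G t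
      · rw [tdOn_of_conn htne hc]
        exact Nat.add_le_add_left (Finset.inf'_le _ hu) 1
      · rw [tdOn_of_not_conn hte hc]
        refine Finset.sup_le (fun v hv => ?_)
        have herase_card : (t.erase u).card = t.card - 1 := Finset.card_erase_of_mem hu
        have hBsmall := (ih (t.card - 1) hn1 (t.erase u) (by omega)).2
        by_cases huc : u ∈ compIn G t v
        · have hcc : ConnIn G (compIn G t v) := connIn_compIn hv
          have hccne : (compIn G t v).Nonempty := ⟨u, huc⟩
          rw [tdOn_of_conn hccne hcc]
          refine Nat.add_le_add_left ?_ 1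
          refine le_trans (Finset.inf'_le _ huc) ?_
          exact hBsmall _ (fun w hw => by
            rcases Finset.mem_erase.1 hw with ⟨hwu, hwc⟩
            exact Finset.mem_erase.2 ⟨hwu, compIn_subset hwc⟩)
        · refine le_trans (hBsmall _ (fun w hw => Finset.mem_erase.2
            ⟨fun h => huc (h ▸ hw), compIn_subset hw⟩)) ?_
          omega
    · rw [Finset.erase_eq_of_notMem hu]; omega
  refine ⟨hA, fun s hs => ?_⟩
  by_cases hst : s = t
  · rw [hst]
  have hss : s ⊂ t := ssubset_of_subset_of_ne hs hst
  have hscard : s.card < t.card := Finset.card_lt_card hss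
  by_cases hc : ConnIn G t
  · rw [tdOn_of_conn htne hc]
    obtain ⟨v0, hv0, hv0eq⟩ := Finset.exists_mem_eq_inf' htne (fun v => tdOn G (t.erase v))
    rw [hv0eq]
    have herase_card : (t.erase v0).card = t.card - 1 := Finset.card_erase_of_mem hv0
    have hBsmall := (ih (t.card - 1) hn1 (t.erase v0) (by omega)).2
    by_cases hvs : v0 ∈ s
    · have hAs := (ih s.card (by omega) s le_rfl).1 v0
      refine le_trans hAs (Nat.add_le_add_left ?_ 1)
      exact hBsmall _ (fun w hw => Finset.mem_erase.2
        ⟨(Finset.mem_erase.1 hw).1, hs (Finset.mem_erase.1 hw).2⟩)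
    · have : s ⊆ t.erase v0 := fun w hw =>
        Finset.mem_erase.2 ⟨fun h => hvs (h ▸ hw), hs hw⟩
      exact le_trans (hBsmall s this) (by omega)
  · rw [tdOn_of_not_conn hte hc]
    by_cases hse : s = ∅
    · simp [hse, tdOn_empty]
    have hsne : s.Nonempty := Finset.nonempty_of_ne_empty hse
    by_cases hsc : ConnIn G s
    · obtain ⟨x, hx⟩ := hsne
      have hxt : x ∈ t := hs hx
      have hsub : s ⊆ compIn G t x := subset_compIn hs hsc hx
      have hcs : (compIn G t x).card < t.card := Finset.card_lt_card (compIn_ssubset hxt hc)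
      have := (ih (compIn G t x).card (by omega) (compIn G t x) le_rfl).2 s hsub
      exact le_trans this (Finset.le_sup (f := fun v => tdOn G (compIn G t v)) hxt)
    · rw [tdOn_of_not_conn hse hsc]
      refine Finset.sup_le (fun a ha => ?_)
      have hat : a ∈ t := hs ha
      have hcs : (compIn G t a).card < t.card := Finset.card_lt_card (compIn_ssubset hat hc)
      have hsub : compIn G s a ⊆ compIn G t a := compIn_mono hs
      have := (ih (compIn G t a).card (by omega) (compIn G t a) le_rfl).2 _ hsub
      exact le_trans this (Finset.le_sup (f := fun v => tdOn G (compIn G t v)) hat)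

lemma tdOn_mono (G : SimpleGraph V) (h : s ⊆ t) : tdOn G s ≤ tdOn G t :=
  (td_pack G t.card t le_rfl).2 s h

lemma tdOn_le_erase (G : SimpleGraph V) (t : Finset V) (u : V) :
    tdOn G t ≤ 1 + tdOn G (t.erase u) :=
  (td_pack G t.card t le_rfl).1 u

end Mono
section Dom
variable {G : SimpleGraph V} {s t B : Finset V} {u v w x y : V}

lemma connIn_of_dominating (hv : v ∈ s) (hdom : ∀ w ∈ s, w ≠ v → G.Adj v w) :
    ConnIn G s := by
  refine ⟨⟨v, hv⟩, fun a ha b hb => ?_⟩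
  have key : ∀ c ∈ s, ReachIn G s v c := by
    intro c hc
    by_cases hcv : c = v
    · subst hcv; exact Relation.ReflTransGen.refl
    · exact Relation.ReflTransGen.single ⟨hv, hc, hdom c hc hcv⟩
  exact reachIn_trans (reachIn_symm (key a ha)) (key b hb)

lemma tdOn_dominating (G : SimpleGraph V) : ∀ n (s : Finset V), s.card ≤ n → ∀ v ∈ s,
    (∀ w ∈ s, w ≠ v → G.Adj v w) → tdOn G s = 1 + tdOn G (s.erase v) := by
  intro n
  induction n using Nat.strong_induction_on with
  | _ n ih =>
  intro s hn v hv hdom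
  have hsne : s.Nonempty := ⟨v, hv⟩
  have hcard : 1 ≤ s.card := Finset.card_pos.2 hsne
  have hc : ConnIn G s := connIn_of_dominating hv hdom
  rw [tdOn_of_conn hsne hc]
  congr 1
  refine le_antisymm (Finset.inf'_le _ hv) (Finset.le_inf' _ _ (fun u hu => ?_))
  by_cases huv : u = v
  · subst huv; exact le_rfl
  · have hvu : v ∈ s.erase u := Finset.mem_erase.2 ⟨Ne.symm huv, hv⟩
    have hdom' : ∀ w ∈ s.erase u, w ≠ v → G.Adj v w := fun w hw =>
      hdom w (Finset.mem_erase.1 hw).2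
    have hecard : (s.erase u).card = s.card - 1 := Finset.card_erase_of_mem hu
    have := ih (s.card - 1) (by omega) (s.erase u) (by omega) v hvu hdom'
    rw [this, Finset.erase_right_comm]
    exact le_trans (tdOn_le_erase G (s.erase v) u) (by omega)

end Dom
section P4
variable {G : SimpleGraph V} {s t B : Finset V} {u v w x y : V}

lemma reach_avoid (v : V) : ∀ u w, ReachIn G s u w → u ≠ v → w ≠ v →
    ReachIn G (s.erase v) u w ∨
      ∃ y ∈ s.erase v, G.Adj v y ∧ ReachIn G (s.erase v) y w := by
  intro u w h huv
  induction h with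
  | refl => intro _; exact Or.inl Relation.ReflTransGen.refl
  | @tail b c hb hstep ih =>
    intro hcv
    rcases hstep with ⟨hbs, hcs, hadj⟩
    by_cases hbv : b = v
    · subst hbv
      exact Or.inr ⟨c, Finset.mem_erase.2 ⟨hcv, hcs⟩, hadj, Relation.ReflTransGen.refl⟩
    · have hbm : b ∈ s.erase v := Finset.mem_erase.2 ⟨hbv, hbs⟩
      have hcm : c ∈ s.erase v := Finset.mem_erase.2 ⟨hcv, hcs⟩
      rcases ih hbv with h' | ⟨y, hy, hadjy, hry⟩
      · exact Or.inl (h'.tail ⟨hbm, hcm, hadj⟩)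
      · exact Or.inr ⟨y, hy, hadjy, hry.tail ⟨hbm, hcm, hadj⟩⟩

lemma flip_edge (v : V) : ∀ z, ReachIn G t x z → ¬ G.Adj v x → G.Adj v z →
    ∃ a b, a ∈ t ∧ b ∈ t ∧ G.Adj a b ∧ ¬ G.Adj v a ∧ G.Adj v b ∧ ReachIn G t x a := by
  intro z h
  induction h with
  | refl => intro h1 h2; exact absurd h2 h1
  | @tail b c hb hstep ih =>
    intro hx hc
    by_cases hvb : G.Adj v b
    · exact ih hx hvb
    · exact ⟨b, c, hstep.1, hstep.2.1, hstep.2.2, hvb, hc, hb⟩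

lemma induced_p4 {a b : V} (hyv : G.Adj y v) (hvb : G.Adj v b) (hba : G.Adj b a)
    (hyb : ¬ G.Adj y b) (hya : ¬ G.Adj y a) (hva : ¬ G.Adj v a)
    (hyb' : y ≠ b) (hya' : y ≠ a) (hva' : v ≠ a) : HasInducedPathOn G 4 := by
  have hyv' : y ≠ v := G.ne_of_adj hyv
  have hvb' : v ≠ b := G.ne_of_adj hvb
  have hba' : b ≠ a := G.ne_of_adj hba
  refine ⟨![y, v, b, a], ?_, ?_⟩
  · intro i j hij
    fin_cases i <;> fin_cases j <;> simp_all
  · intro i j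
    have h1 := hyv.symm
    have h2 := hvb.symm
    have h3 := hba.symm
    have h4 : ¬ G.Adj b y := fun h => hyb h.symm
    have h5 : ¬ G.Adj a y := fun h => hya h.symm
    have h6 : ¬ G.Adj a v := fun h => hva h.symm
    fin_cases i <;> fin_cases j <;>
      simp_all [SimpleGraph.irrefl]

end P4
section Cut
variable {G : SimpleGraph V} {s t B : Finset V} {u v w x y : V}

lemma dominating_of_cut (hfree : PtFree G 4) (hconn : ConnIn G s) (hv : v ∈ s)
    (hnc : ¬ ConnIn G (s.erase v)) (htne : (s.erase v).Nonempty) :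
    ∀ x ∈ s, x ≠ v → G.Adj v x := by
  by_contra hcon
  push_neg at hcon
  obtain ⟨x, hxs, hxv, hnadj⟩ := hcon
  set t := s.erase v with ht
  have hxt : x ∈ t := Finset.mem_erase.2 ⟨hxv, hxs⟩
  -- find u not reachable from x within t
  have hu : ∃ u ∈ t, ¬ ReachIn G t x u := by
    by_contra h
    push_neg at h
    exact hnc ⟨htne, fun a ha b hb =>
      reachIn_trans (reachIn_symm (h a ha)) (h b hb)⟩
  obtain ⟨u, hut, hxu⟩ := hu
  have huv : u ≠ v := (Finset.mem_erase.1 hut).1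
  -- get a v-neighbor y in a different component than x
  have hy : ∃ y ∈ t, G.Adj v y ∧ ¬ ReachIn G t x y := by
    rcases reach_avoid v x u (hconn.2 x hxs u (Finset.mem_erase.1 hut).2) hxv huv with
      h | ⟨y, hyt, hadjy, hry⟩
    · exact absurd h hxu
    · exact ⟨y, hyt, hadjy, fun h => hxu (reachIn_trans h hry)⟩
  obtain ⟨y, hyt, hvy, hxy⟩ := hy
  -- no vertex in x's component is adjacent to v
  have noadj : ∀ z, ReachIn G t x z → ¬ G.Adj v z := by
    intro z hz hvz
    obtain ⟨a, b, hat, hbt, hab, hva, hvb, hxa⟩ := flip_edge v z hz hnadj hvz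
    have hxb : ReachIn G t x b := hxa.tail ⟨hat, hbt, hab⟩
    have hyb : ¬ G.Adj y b := fun h =>
      hxy (hxb.tail ⟨hbt, hyt, h.symm⟩)
    have hya : ¬ G.Adj y a := fun h =>
      hxy (hxa.tail ⟨hat, hyt, h.symm⟩)
    have hyb' : y ≠ b := fun h => hxy (h ▸ hxb)
    have hya' : y ≠ a := fun h => hxy (h ▸ hxa)
    have hva' : v ≠ a := fun h => (Finset.mem_erase.1 hat).1 h.symm
    exact hfree (induced_p4 hvy.symm hvb hab.symm hyb hya hva hyb' hya' hva')
  -- but a path from y to x in s yields a v-neighbor in x's component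
  have hyv' : y ≠ v := (Finset.mem_erase.1 hyt).1
  rcases reach_avoid v y x (hconn.2 y (Finset.mem_erase.1 hyt).2 x hxs) hyv' hxv with
    h | ⟨y', hy't, hadjy', hry'⟩
  · exact hxy (reachIn_symm h)
  · exact noadj y' (reachIn_symm hry') hadjy'

end Cut
section Blocks
variable {G : SimpleGraph V} {s t B : Finset V} {u v w x y : V}

lemma erase_subset_erase_of_subset (h : B ⊆ s) : B.erase v ⊆ s.erase v :=
  Finset.erase_subset_erase v h

lemma blockset_insert_comp (hv : v ∈ s) (hdom : ∀ w ∈ s, w ≠ v → G.Adj v w)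
    (hu : u ∈ s.erase v) : IsBlockSet G (insert v (compIn G (s.erase v) u)) := by
  set t := s.erase v with ht
  set C := compIn G t u with hC
  have hCt : C ⊆ t := compIn_subset
  have hvC : v ∉ C := fun h => (Finset.mem_erase.1 (hCt h)).1 rfl
  have hdomC : ∀ w ∈ insert v C, w ≠ v → G.Adj v w := by
    intro w hw hwv
    rcases Finset.mem_insert.1 hw with h | h
    · exact absurd h hwv
    · exact hdom w (Finset.mem_of_mem_erase (hCt h)) hwv
  refine ⟨connIn_of_dominating (Finset.mem_insert_self v C) hdomC, fun w hw hne => ?_⟩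
  by_cases hwv : w = v
  · subst hwv
    rw [Finset.erase_insert hvC]
    exact connIn_compIn hu
  · rw [Finset.erase_insert_of_ne (fun h => hwv h.symm)] at hne ⊢
    refine connIn_of_dominating (Finset.mem_insert_self v _) (fun z hz hzv => ?_)
    rcases Finset.mem_insert.1 hz with h | h
    · exact absurd h hzv
    · exact hdom z (Finset.mem_of_mem_erase (hCt (Finset.mem_of_mem_erase h))) hzv

lemma insert_comp_maximal (hv : v ∈ s) (hu : u ∈ s.erase v) {B' : Finset V}
    (hsub : insert v (compIn G (s.erase v) u) ⊆ B') (hB's : B' ⊆ s)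
    (hB' : IsBlockSet G B') : B' = insert v (compIn G (s.erase v) u) := by
  set t := s.erase v with ht
  set C := compIn G t u with hC
  have huC : u ∈ C := self_mem_compIn hu
  have huv : u ≠ v := (Finset.mem_erase.1 hu).1
  refine Finset.Subset.antisymm (fun w hw => ?_) hsub
  by_cases hwv : w = v
  · exact hwv ▸ Finset.mem_insert_self v C
  refine Finset.mem_insert.2 (Or.inr ?_)
  have hwt : w ∈ t := Finset.mem_erase.2 ⟨hwv, hB's hw⟩
  have huB : u ∈ B'.erase v := Finset.mem_erase.2 ⟨huv, hsub (Finset.mem_insert.2 (Or.inr huC))⟩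
  have hwB : w ∈ B'.erase v := Finset.mem_erase.2 ⟨hwv, hw⟩
  have hconn : ConnIn G (B'.erase v) :=
    hB'.2 v (hsub (Finset.mem_insert_self v C)) ⟨u, huB⟩
  have hre : ReachIn G (B'.erase v) u w := hconn.2 u huB w hwB
  have hsub2 : B'.erase v ⊆ t := erase_subset_erase_of_subset hB's
  exact mem_compIn.2 ⟨hwt, reachIn_mono hsub2 hre⟩

lemma isBlock_insert_comp (hv : v ∈ s) (hdom : ∀ w ∈ s, w ≠ v → G.Adj v w)
    (hu : u ∈ s.erase v) : IsBlock G s (insert v (compIn G (s.erase v) u)) := by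
  refine ⟨?_, blockset_insert_comp hv hdom hu, fun B' h1 h2 h3 => insert_comp_maximal hv hu h1 h2 h3⟩
  intro w hw
  rcases Finset.mem_insert.1 hw with h | h
  · exact h ▸ hv
  · exact Finset.mem_of_mem_erase (compIn_subset h)

lemma block_eq_insert_comp (hv : v ∈ s) (hdom : ∀ w ∈ s, w ≠ v → G.Adj v w)
    (htne : (s.erase v).Nonempty) (hB : IsBlock G s B) :
    ∃ u ∈ s.erase v, B = insert v (compIn G (s.erase v) u) := by
  set t := s.erase v with ht
  obtain ⟨hBs, hBb, hBmax⟩ := hB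
  by_cases hex : ∃ u ∈ B, u ≠ v
  · obtain ⟨u, huB, huv⟩ := hex
    have hut : u ∈ t := Finset.mem_erase.2 ⟨huv, hBs huB⟩
    refine ⟨u, hut, ?_⟩
    have hsub : B ⊆ insert v (compIn G t u) := by
      intro w hw
      by_cases hwv : w = v
      · exact hwv ▸ Finset.mem_insert_self _ _
      refine Finset.mem_insert.2 (Or.inr ?_)
      have hwt : w ∈ t := Finset.mem_erase.2 ⟨hwv, hBs hw⟩
      by_cases hvB : v ∈ B
      · have hconn : ConnIn G (B.erase v) := hBb.2 v hvB ⟨u, Finset.mem_erase.2 ⟨huv, huB⟩⟩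
        have := hconn.2 u (Finset.mem_erase.2 ⟨huv, huB⟩) w (Finset.mem_erase.2 ⟨hwv, hw⟩)
        exact mem_compIn.2 ⟨hwt, reachIn_mono (erase_subset_erase_of_subset hBs) this⟩
      · have hBt : B ⊆ t := fun z hz => Finset.mem_erase.2 ⟨fun h => hvB (h ▸ hz), hBs hz⟩
        exact mem_compIn.2 ⟨hwt, reachIn_mono hBt (hBb.1.2 u huB w hw)⟩
    exact (hBmax _ hsub (isBlock_insert_comp hv hdom hut).1
      (blockset_insert_comp hv hdom hut)).symm
  · push_neg at hex
    obtain ⟨u, hut⟩ := htne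
    refine ⟨u, hut, ?_⟩
    have hsub : B ⊆ insert v (compIn G t u) := fun w hw =>
      (hex w hw) ▸ Finset.mem_insert_self _ _
    exact (hBmax _ hsub (isBlock_insert_comp hv hdom hut).1
      (blockset_insert_comp hv hdom hut)).symm

lemma comp_isBlock_of_blockset (hx : x ∈ s) (hbs : IsBlockSet G (compIn G s x)) :
    IsBlock G s (compIn G s x) := by
  refine ⟨compIn_subset, hbs, fun B' h1 h2 h3 => ?_⟩
  have hxB : x ∈ B' := h1 (self_mem_compIn hx)
  exact Finset.Subset.antisymm (subset_compIn h2 h3.1 hxB) h1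

lemma isBlock_of_isBlock_comp (hx : x ∈ s) (hB : IsBlock G (compIn G s x) B) :
    IsBlock G s B := by
  obtain ⟨hBs, hBb, hBmax⟩ := hB
  refine ⟨hBs.trans compIn_subset, hBb, fun B' h1 h2 h3 => ?_⟩
  obtain ⟨y, hy⟩ := hBb.1.1
  have hyB' : y ∈ B' := h1 hy
  have hsub : B' ⊆ compIn G s y := subset_compIn h2 h3.1 hyB'
  have heq : compIn G s x = compIn G s y :=
    compIn_eq_of_reach hx (mem_compIn.1 (hBs hy)).2
  exact hBmax B' h1 (heq ▸ hsub) h3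

lemma isBlock_comp_of_isBlock (hx : x ∈ s) (hBC : B ⊆ compIn G s x)
    (hB : IsBlock G s B) : IsBlock G (compIn G s x) B :=
  ⟨hBC, hB.2.1, fun B' h1 h2 h3 => hB.2.2 B' h1 (h2.trans compIn_subset) h3⟩

end Blocks
section Main
variable {G : SimpleGraph V} {s t B : Finset V} {u v w x y : V}

lemma sup_one_add {α : Type*} {t : Finset α} (f : α → ℕ) (ht : t.Nonempty) :
    1 + t.sup f = t.sup (fun u => 1 + f u) := by
  refine le_antisymm ?_ (Finset.sup_le (fun u hu => Nat.add_le_add_left (Finset.le_sup hu) 1))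
  obtain ⟨u0, hu0, heq⟩ := Finset.exists_mem_eq_sup t ht f
  rw [heq]
  exact Finset.le_sup (f := fun u => 1 + f u) hu0

lemma td2On_eq_tdOn (hfree : PtFree G 4) : ∀ n (s : Finset V), s.card ≤ n →
    td2On G s = tdOn G s := by
  intro n
  induction n using Nat.strong_induction_on with
  | _ n ih =>
  intro s hn
  by_cases hse : s = ∅
  · simp [hse, tdOn_empty, td2On_empty]
  have hsne : s.Nonempty := Finset.nonempty_of_ne_empty hse
  have hcard : 1 ≤ s.card := Finset.card_pos.2 hsne
  by_cases hcb : IsBlockSet G s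
  · -- block case
    rw [td2On_of_block hsne hcb, tdOn_of_conn hsne hcb.1]
    congr 1
    refine Finset.inf'_congr _ rfl (fun a ha => ?_)
    have h1 : (s.erase a).card = s.card - 1 := Finset.card_erase_of_mem ha
    exact ih (s.card - 1) (by omega) _ (by omega)
  by_cases hc : ConnIn G s
  · -- connected, not a block: dominating cut vertex
    have hex : ∃ v ∈ s, (s.erase v).Nonempty ∧ ¬ ConnIn G (s.erase v) := by
      by_contra h
      push_neg at h
      exact hcb ⟨hc, h⟩
    obtain ⟨v, hv, htne, hnc⟩ := hex
    have hdom : ∀ x ∈ s, x ≠ v → G.Adj v x := dominating_of_cut hfree hc hv hnc htne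
    set t := s.erase v with htdef
    have hte : t ≠ ∅ := Finset.nonempty_iff_ne_empty.1 htne
    have htd : tdOn G s = t.sup (fun u => tdOn G (insert v (compIn G t u))) := by
      rw [tdOn_dominating G s.card s le_rfl v hv hdom, tdOn_of_not_conn hte hnc,
        sup_one_add (fun u => tdOn G (compIn G t u)) htne]
      refine Finset.sup_congr rfl (fun u hu => ?_)
      set C := compIn G t u with hC
      have hvC : v ∉ C := fun h => (Finset.mem_erase.1 (compIn_subset h)).1 rfl
      have hdomC : ∀ w ∈ insert v C, w ≠ v → G.Adj v w := by
        intro w hw hwv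
        rcases Finset.mem_insert.1 hw with h | h
        · exact absurd h hwv
        · exact hdom w (Finset.mem_of_mem_erase (compIn_subset h)) hwv
      rw [tdOn_dominating G _ (insert v C) le_rfl v (Finset.mem_insert_self v C) hdomC,
        Finset.erase_insert hvC]
    rw [htd, td2On_of_not_block hse hcb]
    have hblocksub : ∀ B ∈ s.powerset.filter (fun B => IsBlock G s B), B.card < s.card := by
      intro B hB
      rcases Finset.mem_filter.1 hB with ⟨hBp, hBb⟩
      exact Finset.card_lt_card
        (blockset_ssubset_of_not (Finset.mem_powerset.1 hBp) hBb.2.1 hcb)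
    have hsupeq : (s.powerset.filter (fun B => IsBlock G s B)).sup (fun B => td2On G B)
        = (s.powerset.filter (fun B => IsBlock G s B)).sup (fun B => tdOn G B) :=
      Finset.sup_congr rfl (fun B hB => ih (s.card - 1) (by omega) B
        (by have := hblocksub B hB; omega))
    rw [hsupeq]
    refine le_antisymm (Finset.sup_le (fun B hB => ?_)) (Finset.sup_le (fun u hu => ?_))
    · rcases Finset.mem_filter.1 hB with ⟨hBp, hBb⟩
      obtain ⟨u, hu, hBeq⟩ := block_eq_insert_comp hv hdom htne hBb
      rw [hBeq]
      exact Finset.le_sup (f := fun u => tdOn G (insert v (compIn G t u))) hu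
    · have hbl : IsBlock G s (insert v (compIn G t u)) := isBlock_insert_comp hv hdom hu
      have hmem : insert v (compIn G t u) ∈ s.powerset.filter (fun B => IsBlock G s B) :=
        Finset.mem_filter.2 ⟨Finset.mem_powerset.2 hbl.1, hbl⟩
      exact Finset.le_sup (f := fun B => tdOn G B) hmem
  · -- disconnected case
    rw [td2On_of_not_block hse hcb]
    have key : (s.powerset.filter (fun B => IsBlock G s B)).sup (fun B => td2On G B)
        = s.sup (fun x => td2On G (compIn G s x)) := by
      refine le_antisymm (Finset.sup_le (fun B hB => ?_)) (Finset.sup_le (fun x hx => ?_))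
      · rcases Finset.mem_filter.1 hB with ⟨hBp, hBb⟩
        have hBs : B ⊆ s := Finset.mem_powerset.1 hBp
        obtain ⟨y, hy⟩ := hBb.2.1.1.1
        have hys : y ∈ s := hBs hy
        have hBC : B ⊆ compIn G s y := subset_compIn hBs hBb.2.1.1 hy
        by_cases hbs : IsBlockSet G (compIn G s y)
        · rw [← hBb.2.2 _ hBC compIn_subset hbs]
          exact Finset.le_sup (f := fun x => td2On G (compIn G s x)) hys
        · have hCne : compIn G s y ≠ ∅ := fun h => by
            simpa [h] using hBC hy
          have hCblk : IsBlock G (compIn G s y) B := isBlock_comp_of_isBlock hys hBC hBb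
          have : td2On G B ≤ td2On G (compIn G s y) := by
            rw [td2On_of_not_block hCne hbs]
            exact Finset.le_sup (f := fun B => td2On G B)
              (Finset.mem_filter.2 ⟨Finset.mem_powerset.2 hBC, hCblk⟩)
          exact this.trans (Finset.le_sup (f := fun x => td2On G (compIn G s x)) hys)
      · by_cases hbs : IsBlockSet G (compIn G s x)
        · exact Finset.le_sup (f := fun B => td2On G B)
            (Finset.mem_filter.2 ⟨Finset.mem_powerset.2 compIn_subset,
              comp_isBlock_of_blockset hx hbs⟩)
        · have hCne : compIn G s x ≠ ∅ := fun h =>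
            absurd (self_mem_compIn (G := G) hx) (by simp [h])
          rw [td2On_of_not_block hCne hbs]
          refine Finset.sup_le (fun B hB => ?_)
          rcases Finset.mem_filter.1 hB with ⟨hBp, hBb⟩
          exact Finset.le_sup (f := fun B => td2On G B)
            (Finset.mem_filter.2 ⟨Finset.mem_powerset.2
              ((Finset.mem_powerset.1 hBp).trans compIn_subset),
              isBlock_of_isBlock_comp hx hBb⟩)
    rw [key, tdOn_of_not_conn hse hc]
    refine Finset.sup_congr rfl (fun x hx => ?_)
    have h1 : (compIn G s x).card < s.card := Finset.card_lt_card (compIn_ssubset hx hc)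
    exact ih (s.card - 1) (by omega) _ (by omega)

end Main

theorem p4free_td_eq_td2 {V : Type} [Fintype V] (G : SimpleGraph V)
    (hfree : PtFree G 4) : td G = td2 G :=
  (td2On_eq_tdOn hfree Finset.univ.card Finset.univ le_rfl).symm
end
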